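/- Let L > 0 and let Q = [−L, L] × [−L, L] ⊂ ℝ². Let γ₀, γ₁ > 0, let γ : ℝ² → ℝ be continuous and strictly positive on Q, and let u, v : ℝ² → ℝ be continuously differentiable on a neighborhood of Q with ∂ₓu(z) = γ(z)·∂_yv(z) and ∂_yu(z) = −γ(z)·∂ₓv(z) for all z in Q. Suppose the boundary conditions v(x, −L) = 0 and v(x, L) = v₀ for all x in [−L, L], and u(−L, y) = 0 and u(L, y) = u₀ for all y in [−L, L], hold with u₀, v₀ ≠ 0. Define the total conductivities Γ⁺ = (1/v₀)·∫_{−L}^{L} γ(x, L)·∂_yv(x, L) dx and Γ⁻ = (1/u₀)·∫_{−L}^{L} (γ₀γ₁/γ(L, y))·∂ₓu(L, y) dy. Then Γ⁺·Γ⁻ = γ₀·γ₁. -/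

import Mathlib

open MeasureTheory intervalIntegral

/-- The Keller–Dykhne reciprocity law (classical form): if `u` is the γ-harmonic
conjugate of the OS-type potential `v` on the box `Q = [−L,L]²`, with the stated
Dirichlet boundary data, then the product of the OS-type total conductivity `Γ⁺`
(normal current through the top edge) and the VS-type total conductivity `Γ⁻`
(dual current through the right edge) equals `γ₀·γ₁`. -/
theorem keller_dykhne_reciprocity (L : ℝ) (hL : 0 < L)
    (γ₀ γ₁ : ℝ) (h0 : 0 < γ₀) (h1 : 0 < γ₁)
    (γ : ℝ × ℝ → ℝ)
    (hγc : ContinuousOn γ (Set.Icc ((-L, -L) : ℝ × ℝ) (L, L)))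
    (hγpos : ∀ z ∈ Set.Icc ((-L, -L) : ℝ × ℝ) (L, L), 0 < γ z)
    (u v : ℝ × ℝ → ℝ) (V : Set (ℝ × ℝ)) (hV : IsOpen V)
    (hQV : Set.Icc ((-L, -L) : ℝ × ℝ) (L, L) ⊆ V)
    (hu : ContDiffOn ℝ 1 u V) (hv : ContDiffOn ℝ 1 v V)
    (hx : ∀ z ∈ Set.Icc ((-L, -L) : ℝ × ℝ) (L, L),
      fderiv ℝ u z (1, 0) = γ z * fderiv ℝ v z (0, 1))
    (hy : ∀ z ∈ Set.Icc ((-L, -L) : ℝ × ℝ) (L, L),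
      fderiv ℝ u z (0, 1) = -(γ z) * fderiv ℝ v z (1, 0))
    (u₀ v₀ : ℝ) (hu₀ : u₀ ≠ 0) (hv₀ : v₀ ≠ 0)
    (hvbot : ∀ x ∈ Set.Icc (-L) L, v (x, -L) = 0)
    (hvtop : ∀ x ∈ Set.Icc (-L) L, v (x, L) = v₀)
    (huleft : ∀ y ∈ Set.Icc (-L) L, u (-L, y) = 0)
    (huright : ∀ y ∈ Set.Icc (-L) L, u (L, y) = u₀) :
    ((1 / v₀) * ∫ x in (-L)..L, γ (x, L) * fderiv ℝ v (x, L) (0, 1)) *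
        ((1 / u₀) * ∫ y in (-L)..L, (γ₀ * γ₁ / γ (L, y)) * fderiv ℝ u (L, y) (1, 0)) =
      γ₀ * γ₁ := by

  have hLL : -L ≤ L := by linarith
  have hmemx : ∀ x ∈ Set.Icc (-L) L, (x, L) ∈ Set.Icc ((-L, -L) : ℝ × ℝ) (L, L) := by
    intro x hxm
    simp only [Set.mem_Icc, Prod.mk_le_mk] at *
    exact ⟨⟨hxm.1, hLL⟩, ⟨hxm.2, le_rfl⟩⟩
  have hmemy : ∀ y ∈ Set.Icc (-L) L, (L, y) ∈ Set.Icc ((-L, -L) : ℝ × ℝ) (L, L) := by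
    intro y hym
    simp only [Set.mem_Icc, Prod.mk_le_mk] at *
    exact ⟨⟨hLL, hym.1⟩, ⟨le_rfl, hym.2⟩⟩
  have hdu : ∀ z ∈ V, DifferentiableAt ℝ u z := fun z hz =>
    (hu.differentiableOn one_ne_zero).differentiableAt (hV.mem_nhds hz)
  have hdv : ∀ z ∈ V, DifferentiableAt ℝ v z := fun z hz =>
    (hv.differentiableOn one_ne_zero).differentiableAt (hV.mem_nhds hz)
  have hfu : ContinuousOn (fderiv ℝ u) V := hu.continuousOn_fderiv_of_isOpen hV le_rfl
  have hfv : ContinuousOn (fderiv ℝ v) V := hv.continuousOn_fderiv_of_isOpen hV le_rfl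
  -- top edge FTC
  have htopline : Continuous (fun x : ℝ => ((x, L) : ℝ × ℝ)) :=
    continuous_id.prodMk continuous_const
  have hrightline : Continuous (fun y : ℝ => ((L, y) : ℝ × ℝ)) :=
    continuous_const.prodMk continuous_id
  have hI1 : (∫ x in (-L)..L, γ (x, L) * fderiv ℝ v (x, L) (0, 1)) = u₀ := by
    have hcong : ∀ x ∈ Set.uIcc (-L) L,
        γ (x, L) * fderiv ℝ v (x, L) (0, 1) = fderiv ℝ u (x, L) (1, 0) := by
      intro x hxm
      rw [Set.uIcc_of_le hLL] at hxm
      exact (hx _ (hmemx x hxm)).symm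
    rw [intervalIntegral.integral_congr hcong]
    have hderiv : ∀ x ∈ Set.uIcc (-L) L,
        HasDerivAt (fun x => u (x, L)) (fderiv ℝ u (x, L) (1, 0)) x := by
      intro x hxm
      rw [Set.uIcc_of_le hLL] at hxm
      have hz : (x, L) ∈ V := hQV (hmemx x hxm)
      have h1 : HasFDerivAt u (fderiv ℝ u (x, L)) (x, L) := (hdu _ hz).hasFDerivAt
      have h2 : HasDerivAt (fun x : ℝ => ((x, L) : ℝ × ℝ)) ((1 : ℝ), (0 : ℝ)) x :=
        (hasDerivAt_id x).prodMk (hasDerivAt_const x L)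
      exact h1.comp_hasDerivAt x h2
    have hint : IntervalIntegrable (fun x => fderiv ℝ u (x, L) (1, 0)) volume (-L) L := by
      apply ContinuousOn.intervalIntegrable
      rw [Set.uIcc_of_le hLL]
      have h1 : ContinuousOn (fun x : ℝ => fderiv ℝ u (x, L)) (Set.Icc (-L) L) :=
        hfu.comp htopline.continuousOn (fun x hxm => hQV (hmemx x hxm))
      exact h1.clm_apply continuousOn_const
    have := intervalIntegral.integral_eq_sub_of_hasDerivAt hderiv hint
    rw [this, huright L (Set.right_mem_Icc.mpr hLL),
      huleft L (Set.right_mem_Icc.mpr hLL), sub_zero]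
  have hI2 : (∫ y in (-L)..L, (γ₀ * γ₁ / γ (L, y)) * fderiv ℝ u (L, y) (1, 0))
      = γ₀ * γ₁ * v₀ := by
    have hcong : ∀ y ∈ Set.uIcc (-L) L,
        (γ₀ * γ₁ / γ (L, y)) * fderiv ℝ u (L, y) (1, 0)
          = γ₀ * γ₁ * fderiv ℝ v (L, y) (0, 1) := by
      intro y hym
      rw [Set.uIcc_of_le hLL] at hym
      have hz := hmemy y hym
      rw [hx _ hz]
      field_simp [(hγpos _ hz).ne']
    rw [intervalIntegral.integral_congr hcong]
    have hderiv : ∀ y ∈ Set.uIcc (-L) L,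
        HasDerivAt (fun y => v (L, y)) (fderiv ℝ v (L, y) (0, 1)) y := by
      intro y hym
      rw [Set.uIcc_of_le hLL] at hym
      have hz : (L, y) ∈ V := hQV (hmemy y hym)
      have h1 : HasFDerivAt v (fderiv ℝ v (L, y)) (L, y) := (hdv _ hz).hasFDerivAt
      have h2 : HasDerivAt (fun y : ℝ => ((L, y) : ℝ × ℝ)) ((0 : ℝ), (1 : ℝ)) y :=
        (hasDerivAt_const y L).prodMk (hasDerivAt_id y)
      exact h1.comp_hasDerivAt y h2
    have hint : IntervalIntegrable (fun y => fderiv ℝ v (L, y) (0, 1)) volume (-L) L := by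
      apply ContinuousOn.intervalIntegrable
      rw [Set.uIcc_of_le hLL]
      have h1 : ContinuousOn (fun y : ℝ => fderiv ℝ v (L, y)) (Set.Icc (-L) L) :=
        hfv.comp hrightline.continuousOn (fun y hym => hQV (hmemy y hym))
      exact h1.clm_apply continuousOn_const
    rw [intervalIntegral.integral_const_mul,
      intervalIntegral.integral_eq_sub_of_hasDerivAt hderiv hint,
      hvtop L (Set.right_mem_Icc.mpr hLL), hvbot L (Set.right_mem_Icc.mpr hLL), sub_zero]
  rw [hI1, hI2]
  field_simp
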